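/- Let s ≥ 1, t ≥ 1, z ≥ 1 and λ ≥ z be natural numbers and set θ = t·s + λ. Define P_CA = {j + s·i : 0 ≤ j ≤ s−1, 0 ≤ i ≤ t−1}, P_CB = {(s−1−k) + θ·l : 0 ≤ k ≤ s−1, 0 ≤ l ≤ t−1}, P_SA = {t·s + u : 0 ≤ u ≤ z−1}, and P_SB = {t·s + θ·(t−1) + r : 0 ≤ r ≤ z−1}. Then for every 0 ≤ i ≤ t−1 and 0 ≤ l ≤ t−1, the important power (s−1) + s·i + θ·l belongs to none of the sumsets P_SB + P_CA, P_SA + P_CB, and P_SA + P_SB. -/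
import Mathlib


open Pointwise

/-- AGE-CMPC privacy conditions C4–C6 in the branch z ≤ λ
(secret polynomial S_{A_2}), with θ = t·s + λ. -/
theorem age_conditions_lambda_ge_z (s t z lam : ℕ) (hs : 1 ≤ s) (ht : 1 ≤ t)
    (hz : 1 ≤ z) (hlam : z ≤ lam) :
    ∀ i l, i < t → l < t →
      (s - 1) + s * i + (t * s + lam) * l ∉
        ({n : ℕ | ∃ r, r < z ∧ n = t * s + (t * s + lam) * (t - 1) + r} +
         {n : ℕ | ∃ j i', j < s ∧ i' < t ∧ n = j + s * i'}) ∧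
      (s - 1) + s * i + (t * s + lam) * l ∉
        ({n : ℕ | ∃ u, u < z ∧ n = t * s + u} +
         {n : ℕ | ∃ k l', k < s ∧ l' < t ∧ n = (s - 1 - k) + (t * s + lam) * l'}) ∧
      (s - 1) + s * i + (t * s + lam) * l ∉
        ({n : ℕ | ∃ u, u < z ∧ n = t * s + u} +
         {n : ℕ | ∃ r, r < z ∧ n = t * s + (t * s + lam) * (t - 1) + r}) := by
  intro i l hi hl
  have hsi : s * i + s ≤ t * s := by
    calc s * i + s = s * (i + 1) := by ring
    _ ≤ s * t := Nat.mul_le_mul_left s hi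
    _ = t * s := Nat.mul_comm s t
  have hθl : (t * s + lam) * l ≤ (t * s + lam) * (t - 1) :=
    Nat.mul_le_mul_left _ (by omega)
  refine ⟨?_, ?_, ?_⟩
  · rintro ⟨x, ⟨r, hr, rfl⟩, y, ⟨j, i', hj, hi', rfl⟩, heq⟩
    beta_reduce at heq
    have hsi' : s * i' + s ≤ t * s := by
      calc s * i' + s = s * (i' + 1) := by ring
      _ ≤ s * t := Nat.mul_le_mul_left s hi'
      _ = t * s := Nat.mul_comm s t
    revert heq hsi hθl hsi'
    generalize s * i = A
    generalize s * i' = B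
    generalize (t * s + lam) * l = C
    generalize (t * s + lam) * (t - 1) = D
    generalize t * s = E
    omega
  · rintro ⟨x, ⟨u, hu, rfl⟩, y, ⟨k, l', hk, hl', rfl⟩, heq⟩
    beta_reduce at heq
    rcases le_or_gt l l' with h | h
    · obtain ⟨d, rfl⟩ : ∃ d, l' = l + d := ⟨l' - l, by omega⟩
      rw [Nat.mul_add] at heq
      revert heq hsi
      generalize s * i = A
      generalize (t * s + lam) * l = C
      generalize (t * s + lam) * d = D
      generalize t * s = E
      omega
    · obtain ⟨d, rfl⟩ : ∃ d, l = l' + (d + 1) := ⟨l - l' - 1, by omega⟩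
      rw [Nat.mul_add] at heq
      have hE : t * s + lam ≤ (t * s + lam) * (d + 1) :=
        Nat.le_mul_of_pos_right _ (by omega)
      revert heq hsi hE
      generalize s * i = A
      generalize (t * s + lam) * l' = C
      generalize (t * s + lam) * (d + 1) = D
      generalize t * s = E
      omega
  · rintro ⟨x, ⟨u, hu, rfl⟩, y, ⟨r, hr, rfl⟩, heq⟩
    beta_reduce at heq
    revert heq hsi hθl
    generalize s * i = A
    generalize (t * s + lam) * l = C
    generalize (t * s + lam) * (t - 1) = D
    generalize t * s = E
    omega
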